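/- Let (a_n)_{n≥1} be a strong divisibility sequence in a GCD domain R. If n ≥ 2 has prime factorization n = p_1^{α_1} ⋯ p_s^{α_s} with distinct primes p_i, then lcm(a_1,...,a_n)/lcm(a_1,...,a_{n-1}) is associated to a_n / lcm(a_{n/p_1}, a_{n/p_2}, ..., a_{n/p_s}). -/

import Mathlib

/-- `iterLcm a n` is an lcm of `a 1, a 2, …, a n` (with `iterLcm a 0 = 1`). -/
noncomputable def iterLcm {R : Type*} [CommRing R] [IsDomain R] [GCDMonoid R]
    (a : ℕ → R) : ℕ → R
  | 0 => 1
  | n + 1 => lcm (iterLcm a n) (a (n + 1))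

/-- An lcm of a list of elements of a GCD domain. -/
noncomputable def listLcm {R : Type*} [CommRing R] [IsDomain R] [GCDMonoid R] :
    List R → R
  | [] => 1
  | x :: xs => lcm x (listLcm xs)

section Aux

variable {R : Type*} [CommRing R] [IsDomain R] [GCDMonoid R]

/-- gcd distributes over lcm (divisibility direction needed). -/
lemma aux_gcd_lcm_dvd {x y z : R} (hz : z ≠ 0) :
    gcd (lcm x y) z ∣ lcm (gcd x z) (gcd y z) := by
  set A := gcd (lcm x y) z with hA
  set c := gcd (gcd x y) z with hc
  have hcne : c ≠ 0 := fun h => hz ((gcd_eq_zero_iff _ _).mp h).2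
  have hAz : A ∣ z := gcd_dvd_right _ _
  have hcx : c ∣ x := (gcd_dvd_left _ _).trans (gcd_dvd_left _ _)
  have hcy : c ∣ y := (gcd_dvd_left _ _).trans (gcd_dvd_right _ _)
  have hcz : c ∣ z := gcd_dvd_right _ _
  have hAxy : A * c ∣ x * y := by
    calc A * c ∣ lcm x y * gcd x y :=
          mul_dvd_mul (gcd_dvd_left _ _) (gcd_dvd_left _ _)
      _ = gcd x y * lcm x y := mul_comm _ _
      _ ∣ x * y := (gcd_mul_lcm x y).dvd
  have hAzx : A * c ∣ z * x := mul_dvd_mul hAz hcx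
  have hAzy : A * c ∣ z * y := mul_dvd_mul hAz hcy
  have hAzz : A * c ∣ z * z := mul_dvd_mul hAz hcz
  have h1 : A * c ∣ gcd x z * y :=
    (dvd_gcd hAxy hAzy).trans (gcd_mul_right' y x z).dvd
  have h2 : A * c ∣ gcd x z * z :=
    (dvd_gcd (by rwa [mul_comm z x] at hAzx) hAzz).trans (gcd_mul_right' z x z).dvd
  have h3 : A * c ∣ gcd x z * gcd y z :=
    (dvd_gcd h1 h2).trans (gcd_mul_left' (gcd x z) y z).dvd
  have hcc : Associated (gcd (gcd x z) (gcd y z)) c := by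
    apply associated_of_dvd_dvd
    · exact dvd_gcd
        (dvd_gcd ((gcd_dvd_left _ _).trans (gcd_dvd_left _ _))
          ((gcd_dvd_right _ _).trans (gcd_dvd_left _ _)))
        ((gcd_dvd_left _ _).trans (gcd_dvd_right _ _))
    · exact dvd_gcd (dvd_gcd hcx hcz) (dvd_gcd hcy hcz)
  have h4 : A * c ∣ lcm (gcd x z) (gcd y z) * c := by
    have h5 : A * c ∣ gcd (gcd x z) (gcd y z) * lcm (gcd x z) (gcd y z) :=
      h3.trans (gcd_mul_lcm (gcd x z) (gcd y z)).symm.dvd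
    rw [mul_comm (gcd (gcd x z) (gcd y z))] at h5
    exact h5.trans (Associated.mul_left _ hcc).dvd
  exact (mul_dvd_mul_iff_right hcne).mp h4

lemma aux_iterLcm_dvd (f : ℕ → R) (z : R) :
    ∀ k, (∀ m, 1 ≤ m → m ≤ k → f m ∣ z) → iterLcm f k ∣ z
  | 0, _ => by simp [iterLcm]
  | k + 1, h => by
    simp only [iterLcm]
    exact lcm_dvd (aux_iterLcm_dvd f z k fun m h1 h2 => h m h1 (h2.trans (Nat.le_succ k)))
      (h (k + 1) (Nat.succ_le_succ (Nat.zero_le k)) le_rfl)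

lemma aux_dvd_iterLcm (f : ℕ → R) :
    ∀ k m, 1 ≤ m → m ≤ k → f m ∣ iterLcm f k
  | 0, m, h1, h2 => absurd (h1.trans h2) (by simp)
  | k + 1, m, h1, h2 => by
    simp only [iterLcm]
    rcases eq_or_lt_of_le h2 with rfl | h
    · exact dvd_lcm_right _ _
    · exact (aux_dvd_iterLcm f k m h1 (Nat.lt_succ_iff.mp h)).trans (dvd_lcm_left _ _)

lemma aux_listLcm_dvd {z : R} : ∀ {l : List R}, (∀ x ∈ l, x ∣ z) → listLcm l ∣ z
  | [], _ => by simp [listLcm]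
  | x :: xs, h => by
    simp only [listLcm]
    exact lcm_dvd (h x List.mem_cons_self)
      (aux_listLcm_dvd fun y hy => h y (List.mem_cons_of_mem x hy))

lemma aux_dvd_listLcm {x : R} : ∀ {l : List R}, x ∈ l → x ∣ listLcm l
  | y :: ys, h => by
    simp only [listLcm]
    rcases List.mem_cons.mp h with rfl | h
    · exact dvd_lcm_left _ _
    · exact (aux_dvd_listLcm h).trans (dvd_lcm_right _ _)

lemma aux_gcd_iterLcm (a : ℕ → R) {z : R} (hz : z ≠ 0) :
    ∀ k, gcd (iterLcm a k) z ∣ iterLcm (fun m => gcd (a m) z) k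
  | 0 => by simp only [iterLcm]; exact gcd_dvd_left 1 z
  | k + 1 => by
    simp only [iterLcm]
    exact (aux_gcd_lcm_dvd hz).trans
      (lcm_dvd_lcm (aux_gcd_iterLcm a hz k) dvd_rfl)

end Aux

/-- For a strong divisibility sequence `(a n)` and `n ≥ 2` with prime divisors
`p₁, …, p_s`, the quotient `lcm(a 1,…,a n)/lcm(a 1,…,a (n-1))` is associated to
`a n / lcm(a (n/p₁), …, a (n/p_s))`; equivalently (cross-multiplying),
`lcm(a 1,…,a n) * lcm(a (n/p₁), …, a (n/p_s))` is associated to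
`lcm(a 1,…,a (n-1)) * a n`. -/
theorem lcm_quotient_eq_div_lcm_of_prime_quotients
    {R : Type*} [CommRing R] [IsDomain R] [GCDMonoid R]
    (a : ℕ → R) (ha : ∀ n, 1 ≤ n → a n ≠ 0)
    (hsd : ∀ m n, 1 ≤ m → 1 ≤ n → Associated (gcd (a m) (a n)) (a (Nat.gcd m n)))
    (n : ℕ) (hn : 2 ≤ n) :
    Associated
      (iterLcm a n * listLcm (n.primeFactors.toList.map (fun p => a (n / p))))
      (iterLcm a (n - 1) * a n) := by
  have hn0 : n ≠ 0 := by omega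
  have hn1 : 1 ≤ n := by omega
  have han : a n ≠ 0 := ha n hn1
  -- divisibility within the sequence
  have hdvd : ∀ d k, 1 ≤ d → 1 ≤ k → d ∣ k → a d ∣ a k := by
    intro d k h1 h2 hdk
    have := hsd d k h1 h2
    rw [Nat.gcd_eq_left hdk] at this
    exact this.symm.dvd.trans (gcd_dvd_right _ _)
  set S := listLcm (n.primeFactors.toList.map (fun p => a (n / p))) with hS
  set L := iterLcm a (n - 1) with hL
  -- facts about n/p for p prime factor
  have hquot : ∀ p ∈ n.primeFactors, 1 ≤ n / p ∧ n / p ≤ n - 1 ∧ (n / p) ∣ n := by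
    intro p hp
    obtain ⟨hpp, hpn, -⟩ := Nat.mem_primeFactors.mp hp
    have hple : p ≤ n := Nat.le_of_dvd (by omega) hpn
    refine ⟨(Nat.one_le_div_iff hpp.pos).mpr hple, ?_, Nat.div_dvd_of_dvd hpn⟩
    have : n / p < n := Nat.div_lt_self (by omega) hpp.one_lt
    omega
  -- membership of a (n/p) in the list
  have hmem : ∀ p ∈ n.primeFactors,
      a (n / p) ∈ n.primeFactors.toList.map (fun p => a (n / p)) := by
    intro p hp
    exact List.mem_map.mpr ⟨p, Finset.mem_toList.mpr hp, rfl⟩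
  -- S is associated to gcd L (a n)
  have key : Associated S (gcd L (a n)) := by
    apply associated_of_dvd_dvd
    · -- S ∣ gcd L (a n)
      apply aux_listLcm_dvd
      intro x hx
      obtain ⟨p, hp, rfl⟩ := List.mem_map.mp hx
      have hp' := Finset.mem_toList.mp hp
      obtain ⟨h1, h2, h3⟩ := hquot p hp'
      exact dvd_gcd (aux_dvd_iterLcm a (n - 1) (n / p) h1 h2) (hdvd _ _ h1 hn1 h3)
    · -- gcd L (a n) ∣ S
      have step1 : gcd L (a n) ∣ iterLcm (fun m => gcd (a m) (a n)) (n - 1) :=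
        aux_gcd_iterLcm a han (n - 1)
      refine step1.trans (aux_iterLcm_dvd _ _ _ ?_)
      intro m h1 h2
      set d := Nat.gcd m n with hd
      have hd1 : 1 ≤ d := Nat.gcd_pos_of_pos_left n (by omega)
      have hdn : d ∣ n := Nat.gcd_dvd_right m n
      have hdm : d ≤ m := Nat.le_of_dvd (by omega) (Nat.gcd_dvd_left m n)
      have hdlt : d < n := by omega
      -- find a prime p dividing n / d
      have hnd1 : n / d ≠ 1 := by
        intro h
        have := Nat.div_mul_cancel hdn
        rw [h, one_mul] at this
        omega
      obtain ⟨p, hpp, hpnd⟩ := Nat.exists_prime_and_dvd hnd1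
      have hpn : p ∣ n := hpnd.trans (Nat.div_dvd_of_dvd hdn)
      have hpmem : p ∈ n.primeFactors := Nat.mem_primeFactors.mpr ⟨hpp, hpn, hn0⟩
      have hdnp : d ∣ n / p := by
        rw [Nat.dvd_div_iff_mul_dvd hpn]
        -- d * p ∣ n
        have : d * p ∣ d * (n / d) := mul_dvd_mul_left d hpnd
        rwa [Nat.mul_div_cancel' hdn, mul_comm] at this
      obtain ⟨hq1, -, -⟩ := hquot p hpmem
      have : a d ∣ S := (hdvd d (n / p) hd1 hq1 hdnp).trans (aux_dvd_listLcm (hmem p hpmem))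
      exact ((hsd m n (by omega) hn1).dvd).trans this
  -- assemble
  have hsplit : iterLcm a n = lcm L (a n) := by
    have : n = (n - 1) + 1 := by omega
    rw [this]
    rfl
  rw [hsplit]
  exact (Associated.mul_left (lcm L (a n)) key).trans
    (by rw [mul_comm]; exact gcd_mul_lcm L (a n))
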